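/- Let (X,τ,d) be a pre-e.m.t. space such that (X,τ) is Hausdorff. Then (X,τ,d) is an extended metric-topological space if and only if there exist a compact extended metric-topological space (K,σ,ρ) and a map ι : X → K that is a homeomorphism of (X,τ) onto its image ι(X) (with the relative topology of σ) and is distance preserving, i.e. ρ(ι(x),ι(y)) = d(x,y) for all x,y ∈ X. -/

import Mathlib

open scoped ENNReal

universe u v w

/-- An extended pseudodistance on `X`. -/
structure IsExtPseudoDist {X : Type*} (d : X → X → ℝ≥0∞) : Prop where
  refl : ∀ x, d x x = 0
  symm : ∀ x y, d x y = d y x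
  triangle : ∀ x y z, d x y ≤ d x z + d z y

/-- An extended distance on `X`. -/
structure IsExtDist {X : Type*} (d : X → X → ℝ≥0∞) : Prop where
  eq_zero_iff : ∀ x y, d x y = 0 ↔ x = y
  symm : ∀ x y, d x y = d y x
  triangle : ∀ x y z, d x y ≤ d x z + d z y

/-- `LIP_{b,1}(X,τ,d)`: bounded `τ`-continuous functions `f : X → ℝ` with
`|f x - f y| ≤ d x y`. -/
def Lip1 {X : Type*} (τ : TopologicalSpace X) (d : X → X → ℝ≥0∞) : Set (X → ℝ) :=
  {f | @Continuous X ℝ τ _ f ∧ (∃ C : ℝ, ∀ x, |f x| ≤ C) ∧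
    ∀ x y, ENNReal.ofReal |f x - f y| ≤ d x y}

/-- `(X,τ,d)` is an extended metric-topological space. -/
def IsEMT {X : Type*} (τ : TopologicalSpace X) (d : X → X → ℝ≥0∞) : Prop :=
  IsExtDist d ∧
  τ = (⨅ f ∈ Lip1 τ d, TopologicalSpace.induced f inferInstance) ∧
  (∀ x y, d x y = ⨆ f ∈ Lip1 τ d, ENNReal.ofReal |f x - f y|)

/-- A continuous-short map between (pre-)extended (pseudo)metric-topological spaces. -/
def ContinuousShort {X Y : Type*} (τX : TopologicalSpace X) (dX : X → X → ℝ≥0∞)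
    (τY : TopologicalSpace Y) (dY : Y → Y → ℝ≥0∞) (φ : X → Y) : Prop :=
  @Continuous X Y τX τY φ ∧ ∀ x y, dY (φ x) (φ y) ≤ dX x y

section Aux

variable {X : Type u} (τ : TopologicalSpace X) (d : X → X → ℝ≥0∞)

noncomputable def auxC (f : Lip1 τ d) : ℝ := f.2.2.1.choose

lemma auxC_spec (f : Lip1 τ d) : ∀ x, |f.1 x| ≤ auxC τ d f := f.2.2.1.choose_spec

noncomputable def auxPhi (x : X) (f : Lip1 τ d) : Set.Icc (-(auxC τ d f)) (auxC τ d f) :=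
  ⟨f.1 x, abs_le.1 (auxC_spec τ d f x)⟩

def AuxS : Set (∀ f : Lip1 τ d, Set.Icc (-(auxC τ d f)) (auxC τ d f)) :=
  closure (Set.range (auxPhi τ d))

noncomputable def auxRho (p q : AuxS τ d) : ℝ≥0∞ :=
  ⨆ f : Lip1 τ d, ENNReal.ofReal |(p.1 f : ℝ) - (q.1 f : ℝ)|

def auxE (f : Lip1 τ d) (p : AuxS τ d) : ℝ := p.1 f

lemma auxE_cont (f : Lip1 τ d) : Continuous (auxE τ d f) :=
  continuous_subtype_val.comp ((continuous_apply f).comp continuous_subtype_val)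

set_option maxHeartbeats 1000000 in
lemma auxE_mem (f : Lip1 τ d) : auxE τ d f ∈ Lip1 inferInstance (auxRho τ d) :=
  ⟨auxE_cont τ d f, ⟨auxC τ d f, fun p => abs_le.2 (p.1 f).2⟩,
    fun p q => le_iSup (fun f : Lip1 τ d =>
      ENNReal.ofReal |(p.1 f : ℝ) - (q.1 f : ℝ)|) f⟩

set_option maxHeartbeats 1000000 in
lemma auxS_top : (inferInstance : TopologicalSpace (AuxS τ d))
    = ⨅ f : Lip1 τ d, TopologicalSpace.induced (auxE τ d f) inferInstance := by
  show TopologicalSpace.induced (Subtype.val : AuxS τ d → _) _ = _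
  simp only [Pi.topologicalSpace, instTopologicalSpaceSubtype, induced_iInf, induced_compose]
  rfl

set_option maxHeartbeats 1000000 in
lemma auxRho_dist : IsExtDist (auxRho τ d) := by
  refine ⟨?_, ?_, ?_⟩
  · intro p q
    constructor
    · intro h
      apply Subtype.ext; funext f; apply Subtype.ext
      have h1 : ENNReal.ofReal |(p.1 f : ℝ) - (q.1 f : ℝ)| = 0 :=
        le_antisymm (h ▸ le_iSup (fun f : Lip1 τ d =>
          ENNReal.ofReal |(p.1 f : ℝ) - (q.1 f : ℝ)|) f) (zero_le)
      rw [ENNReal.ofReal_eq_zero] at h1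
      have := abs_eq_zero.1 (le_antisymm h1 (abs_nonneg _))
      linarith
    · rintro rfl
      simp [auxRho]
  · intro p q
    simp only [auxRho, abs_sub_comm]
  · intro p q r
    refine iSup_le fun f => ?_
    calc ENNReal.ofReal |(p.1 f : ℝ) - (q.1 f : ℝ)|
        ≤ ENNReal.ofReal (|(p.1 f : ℝ) - (r.1 f : ℝ)| + |(r.1 f : ℝ) - (q.1 f : ℝ)|) :=
          ENNReal.ofReal_le_ofReal (abs_sub_le _ _ _)
      _ ≤ ENNReal.ofReal |(p.1 f : ℝ) - (r.1 f : ℝ)|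
          + ENNReal.ofReal |(r.1 f : ℝ) - (q.1 f : ℝ)| := ENNReal.ofReal_add_le
      _ ≤ _ := add_le_add (le_iSup (fun f : Lip1 τ d =>
          ENNReal.ofReal |(p.1 f : ℝ) - (r.1 f : ℝ)|) f) (le_iSup (fun f : Lip1 τ d =>
          ENNReal.ofReal |(r.1 f : ℝ) - (q.1 f : ℝ)|) f)

set_option maxHeartbeats 1000000 in
lemma auxRho_emt1 : (inferInstance : TopologicalSpace (AuxS τ d))
    = (⨅ f ∈ Lip1 inferInstance (auxRho τ d), TopologicalSpace.induced f inferInstance) := by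
  refine le_antisymm ?_ ?_
  · exact le_iInf₂ fun g hg => continuous_iff_le_induced.1 hg.1
  · conv_rhs => rw [auxS_top]
    exact le_iInf fun f => iInf₂_le (auxE τ d f) (auxE_mem τ d f)

set_option maxHeartbeats 1000000 in
lemma auxRho_emt2 (p q : AuxS τ d) : auxRho τ d p q
    = ⨆ f ∈ Lip1 inferInstance (auxRho τ d), ENNReal.ofReal |f p - f q| := by
  refine le_antisymm ?_ ?_
  · exact iSup_le fun f => le_iSup₂_of_le (auxE τ d f) (auxE_mem τ d f) le_rfl
  · exact iSup₂_le fun g hg => hg.2.2 p q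

lemma auxRho_emt : IsEMT (inferInstance : TopologicalSpace (AuxS τ d)) (auxRho τ d) :=
  ⟨auxRho_dist τ d, auxRho_emt1 τ d, fun p q => auxRho_emt2 τ d p q⟩

lemma auxS_compact : CompactSpace (AuxS τ d) :=
  isCompact_iff_compactSpace.1 isClosed_closure.isCompact

noncomputable def auxIota (x : X) : AuxS τ d :=
  ⟨auxPhi τ d x, subset_closure ⟨x, rfl⟩⟩

set_option maxHeartbeats 1000000 in
lemma auxIota_pres (hrec : ∀ x y, d x y = ⨆ f ∈ Lip1 τ d, ENNReal.ofReal |f x - f y|)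
    (x y : X) : auxRho τ d (auxIota τ d x) (auxIota τ d y) = d x y := by
  rw [hrec, ← iSup_subtype'']
  rfl

set_option maxHeartbeats 1000000 in
lemma auxInduced : TopologicalSpace.induced (auxIota τ d) inferInstance
    = ⨅ f ∈ Lip1 τ d, TopologicalSpace.induced f inferInstance := by
  rw [auxS_top, induced_iInf]
  simp only [induced_compose]
  rw [iInf_subtype]
  rfl

set_option maxHeartbeats 1000000 in
lemma auxIota_emb (hd : IsExtDist d)
    (htop : τ = (⨅ f ∈ Lip1 τ d, TopologicalSpace.induced f inferInstance))
    (hrec : ∀ x y, d x y = ⨆ f ∈ Lip1 τ d, ENNReal.ofReal |f x - f y|) :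
    @Topology.IsEmbedding X (AuxS τ d) τ inferInstance (auxIota τ d) := by
  refine ⟨⟨htop.trans (auxInduced τ d).symm⟩, ?_⟩
  intro x y h
  have h2 : ∀ f : Lip1 τ d, f.1 x = f.1 y := fun f =>
    congrArg (fun p : AuxS τ d => (p.1 f : ℝ)) h
  have h3 : d x y = 0 := by
    rw [hrec]
    refine le_antisymm (iSup₂_le fun f hf => ?_) (zero_le)
    have hxy : f x = f y := h2 ⟨f, hf⟩
    rw [hxy, sub_self, abs_zero, ENNReal.ofReal_zero]
  exact (hd.eq_zero_iff x y).1 h3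

end Aux

set_option maxHeartbeats 1000000 in
/-- Let `(X,τ,d)` be a pre-e.m.t. space with `(X,τ)` Hausdorff. Then `(X,τ,d)` is an e.m.t.
space if and only if there exist a compact e.m.t. space `(K,σ,ρ)` and a map `ι : X → K`
which is a topological embedding (a homeomorphism onto its image) and is distance
preserving. -/
theorem isEMT_iff_embeds_in_compact {X : Type u} (τ : TopologicalSpace X)
    (d : X → X → ℝ≥0∞) (hd : IsExtDist d) (hT2 : @T2Space X τ) :
    IsEMT τ d ↔
      ∃ (K : Type u) (σ : TopologicalSpace K) (ρ : K → K → ℝ≥0∞) (ι : X → K),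
        IsEMT σ ρ ∧ @CompactSpace K σ ∧
        @Topology.IsEmbedding X K τ σ ι ∧ (∀ x y : X, ρ (ι x) (ι y) = d x y) := by
  constructor
  · rintro ⟨-, htop, hrec⟩
    exact ⟨AuxS τ d, inferInstance, auxRho τ d, auxIota τ d, auxRho_emt τ d,
      auxS_compact τ d, auxIota_emb τ d hd htop hrec, auxIota_pres τ d hrec⟩
  · rintro ⟨K, σ, ρ, ι, ⟨hρdist, hσtop, hρrec⟩, hcomp, hemb, hpres⟩
    have hcomp_mem : ∀ g ∈ Lip1 σ ρ, (g ∘ ι) ∈ Lip1 τ d := by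
      intro g hg
      refine ⟨hg.1.comp hemb.continuous, ?_, fun x y => ?_⟩
      · obtain ⟨Cg, hCg⟩ := hg.2.1
        exact ⟨Cg, fun x => hCg (ι x)⟩
      · calc ENNReal.ofReal |g (ι x) - g (ι y)| ≤ ρ (ι x) (ι y) := hg.2.2 _ _
          _ = d x y := hpres x y
    refine ⟨hd, ?_, ?_⟩
    · refine le_antisymm (le_iInf₂ fun f hf => continuous_iff_le_induced.1 hf.1) ?_
      have hτ : τ = ⨅ g ∈ Lip1 σ ρ, TopologicalSpace.induced (g ∘ ι) inferInstance := by
        rw [hemb.eq_induced]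
        conv_lhs => rw [hσtop]
        simp only [induced_iInf, induced_compose]
      calc (⨅ f ∈ Lip1 τ d, TopologicalSpace.induced f inferInstance)
          ≤ ⨅ g ∈ Lip1 σ ρ, TopologicalSpace.induced (g ∘ ι) inferInstance :=
            le_iInf₂ fun g hg => iInf₂_le (g ∘ ι) (hcomp_mem g hg)
        _ = τ := hτ.symm
    · intro x y
      refine le_antisymm ?_ (iSup₂_le fun f hf => hf.2.2 x y)
      rw [← hpres x y, hρrec]
      exact iSup₂_le fun g hg => le_iSup₂_of_le (g ∘ ι) (hcomp_mem g hg) le_rfl
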